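/- Let X be a real Lévy process such that |X| is not a subordinator and such that the law of X_t is atomless for each t > 0. Let f:(0,∞)→(0,∞) be a continuous nondecreasing function with lim_{t→0+} f(t) > 0, and set T_f := inf{t>0 : X_t > f(t)}. Then P(T_f > 0) = 1 and the process X can neither jump onto the graph {(u,f(u)) : u>0} nor jump from this graph at time T_f: P(X_{T_f−} = f(T_f) < X_{T_f}, T_f < ∞) = 0 and P(X_{T_f−} < X_{T_f} = f(T_f), T_f < ∞) = 0. -/

import Mathlib

open MeasureTheory ProbabilityTheory Filter Set Function
open scoped ENNReal NNReal Topology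

noncomputable section

/-- A (non-killed, i.e. with infinite lifetime) Lévy process with values in a normed
measurable abelian group `E`: it starts from `0`, has càdlàg paths, and has stationary
independent increments. -/
structure IsLevyProcess {Ω : Type*} [MeasurableSpace Ω] (P : Measure Ω)
    {E : Type*} [NormedAddCommGroup E] [MeasurableSpace E] [BorelSpace E]
    (L : ℝ → Ω → E) : Prop where
  measurable : ∀ t, Measurable (L t)
  init : ∀ᵐ ω ∂P, L 0 ω = 0
  right_cont : ∀ ω, ∀ t : ℝ, 0 ≤ t →
    Tendsto (fun s => L s ω) (nhdsWithin t (Ici t)) (nhds (L t ω))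
  left_lim : ∀ ω, ∀ t : ℝ, 0 < t →
    Tendsto (fun s => L s ω) (nhdsWithin t (Iio t)) (nhds (leftLim (fun s => L s ω) t))
  stationary : ∀ s t : ℝ, 0 ≤ s → s ≤ t →
    Measure.map (fun ω => L t ω - L s ω) P = Measure.map (fun ω => L (t - s) ω) P
  indep : ∀ (n : ℕ) (u : Fin (n + 1) → ℝ), Monotone u → 0 ≤ u 0 →
    iIndepFun
      (fun i : Fin n => fun ω => L (u i.succ) ω - L (u i.castSucc) ω) P

end

noncomputable section
namespace LevyAux

/-- An atomless probability measure on `ℝ` has uniformly small concentration. -/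
lemma conc_of_atomless (μ : Measure ℝ) [IsProbabilityMeasure μ]
    (h : ∀ x : ℝ, μ {x} = 0) {c : ℝ≥0∞} (hc : 0 < c) :
    ∃ γ : ℝ, 0 < γ ∧ ∀ x : ℝ, μ (Icc (x - γ) (x + γ)) ≤ c := by
  by_contra hcon
  push_neg at hcon
  choose x hx using fun k : ℕ => hcon (1 / (k + 1)) (by positivity)
  have hR : ∃ R : ℝ, 0 < R ∧ μ (Icc (-R) R)ᶜ < c := by
    have h1 : Tendsto (fun R : ℕ => μ (Icc (-(R:ℝ)) R)ᶜ) atTop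
        (𝓝 (μ (⋂ R : ℕ, (Icc (-(R:ℝ)) R)ᶜ))) := by
      apply tendsto_measure_iInter_atTop (fun i => (measurableSet_Icc.compl).nullMeasurableSet)
      · intro i j hij
        apply compl_subset_compl.mpr
        exact Icc_subset_Icc (by exact_mod_cast neg_le_neg (Nat.cast_le.mpr hij))
          (by exact_mod_cast hij)
      · exact ⟨0, measure_ne_top _ _⟩
    have h2 : (⋂ R : ℕ, (Icc (-(R:ℝ)) R)ᶜ) = ∅ := by
      ext y
      simp only [mem_iInter, mem_compl_iff, mem_Icc, mem_empty_iff_false, iff_false]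
      push_neg
      obtain ⟨R, hR⟩ := exists_nat_ge |y|
      exact ⟨R, (abs_le.mp hR).1, (abs_le.mp hR).2⟩
    rw [h2, measure_empty] at h1
    obtain ⟨R, hR⟩ := (h1.eventually_lt_const hc).exists
    exact ⟨R + 1, by positivity, lt_of_le_of_lt (measure_mono (compl_subset_compl.mpr
      (Icc_subset_Icc (by linarith [Nat.cast_nonneg (α := ℝ) R]) (by linarith)))) hR⟩
  obtain ⟨R, hRpos, hRc⟩ := hR
  have hk1 : ∀ k : ℕ, (1:ℝ)/(k+1) ≤ 1 := by
    intro k; rw [div_le_one (by positivity)]; linarith [Nat.cast_nonneg (α := ℝ) k]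
  have hxb : ∀ k, x k ∈ Icc (-(R+1)) (R+1) := by
    intro k
    by_contra hb
    have hsub : Icc (x k - 1/(k+1)) (x k + 1/(k+1)) ⊆ (Icc (-R) R)ᶜ := by
      intro y hy
      simp only [mem_Icc] at hy
      simp only [mem_compl_iff, mem_Icc, not_and, not_le]
      simp only [mem_Icc, not_and, not_le] at hb
      rcases le_or_gt (-(R+1)) (x k) with h1 | h1
      · intro _; have := hb h1; nlinarith [hk1 k]
      · intro h2; exfalso; nlinarith [hk1 k]
    exact absurd (lt_of_lt_of_le (hx k) (measure_mono hsub)) (not_lt.mpr hRc.le)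
  obtain ⟨a, -, φ, hφ, ha⟩ := tendsto_subseq_of_bounded (Metric.isBounded_Icc _ _) hxb
  have key : ∀ ρ : ℝ, 0 < ρ → c ≤ μ (Icc (a - ρ) (a + ρ)) := by
    intro ρ hρ
    have h1 : ∀ᶠ k in atTop, |x (φ k) - a| < ρ/2 := by
      have := ha.eventually (Metric.ball_mem_nhds a (show (0:ℝ) < ρ/2 by positivity))
      simpa [Real.dist_eq] using this
    have h2 : ∀ᶠ k in atTop, (1:ℝ)/(φ k + 1) < ρ/2 := by
      obtain ⟨m, hm⟩ := exists_nat_gt (2/ρ)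
      rw [eventually_atTop]
      refine ⟨m, fun k hk => ?_⟩
      have h1 : (m:ℝ) ≤ φ k := by
        have : k ≤ φ k := hφ.le_apply
        exact_mod_cast le_trans (Nat.cast_le.mpr hk) (Nat.cast_le.mpr this)
      have h2 : (2:ℝ)/ρ < φ k + 1 := by linarith
      rw [div_lt_iff₀ (by positivity)]
      rw [div_lt_iff₀ hρ] at h2
      nlinarith
    obtain ⟨k, hk1, hk2⟩ := (h1.and h2).exists
    refine le_trans (hx (φ k)).le (measure_mono ?_)
    intro y hy
    simp only [mem_Icc] at hy ⊢
    rw [abs_lt] at hk1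
    constructor <;> nlinarith
  have h3 : Tendsto (fun m : ℕ => μ (Icc (a - 1/(m+1)) (a + 1/(m+1)))) atTop
      (𝓝 (μ (⋂ m : ℕ, Icc (a - 1/(m+1)) (a + 1/(m+1))))) := by
    apply tendsto_measure_iInter_atTop (fun i => measurableSet_Icc.nullMeasurableSet)
    · intro i j hij
      apply Icc_subset_Icc <;>
      · have : (1:ℝ)/(j+1) ≤ 1/(i+1) := by
          apply one_div_le_one_div_of_le (by positivity); exact_mod_cast by linarith [hij]
        linarith
    · exact ⟨0, measure_ne_top _ _⟩
  have h4 : (⋂ m : ℕ, Icc (a - 1/(m+1)) (a + 1/(m+1))) = {a} := by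
    ext y
    simp only [mem_iInter, mem_Icc, mem_singleton_iff]
    constructor
    · intro hy
      by_contra hne
      have habs : 0 < |y - a| := abs_pos.mpr (sub_ne_zero.mpr hne)
      obtain ⟨m, hm⟩ := exists_nat_gt (1/|y - a|)
      have h5 : (1:ℝ)/(m+1) < |y - a| := by
        rw [div_lt_iff₀ (by positivity)]
        rw [div_lt_iff₀ habs] at hm
        nlinarith
      obtain ⟨h6, h7⟩ := hy m
      have h8 : |y - a| ≤ 1/(m+1) := abs_le.mpr ⟨by linarith, by linarith⟩
      linarith
    · intro hy m; constructor <;> simp [hy] <;> positivity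
  rw [h4] at h3
  have h5 : c ≤ μ {a} := ge_of_tendsto h3 (Eventually.of_forall (fun m => key _ (by positivity)))
  rw [h a] at h5
  exact absurd (lt_of_lt_of_le hc h5) (lt_irrefl 0)


lemma indep_add_mem_bound {Ω : Type*} [MeasurableSpace Ω] (P : Measure Ω) [IsProbabilityMeasure P]
    {U V : Ω → ℝ} (hU : Measurable U) (hV : Measurable V) (h : IndepFun U V P)
    {A B : Set ℝ} (hA : MeasurableSet A) (hB : MeasurableSet B) {c : ℝ≥0∞}
    (hc : ∀ v : ℝ, P (U ⁻¹' {u | u + v ∈ A}) ≤ c) :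
    P {ω | U ω + V ω ∈ A ∧ V ω ∈ B} ≤ c * P (V ⁻¹' B) := by
  have hmap : P.map (fun ω => (V ω, U ω)) = (P.map V).prod (P.map U) :=
    ((indepFun_iff_map_prod_eq_prod_map_map hV.aemeasurable hU.aemeasurable).mp h.symm)
  have hS : MeasurableSet {p : ℝ × ℝ | p.2 + p.1 ∈ A ∧ p.1 ∈ B} := by
    apply MeasurableSet.inter
    · exact (measurable_snd.add measurable_fst) hA
    · exact measurable_fst hB
  have h1 : P {ω | U ω + V ω ∈ A ∧ V ω ∈ B}
      = ((P.map V).prod (P.map U)) {p : ℝ × ℝ | p.2 + p.1 ∈ A ∧ p.1 ∈ B} := by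
    rw [← hmap, Measure.map_apply (hV.prodMk hU) hS]
    rfl
  rw [h1, Measure.prod_apply hS]
  have h2 : ∀ v : ℝ, (P.map U) (Prod.mk v ⁻¹' {p : ℝ × ℝ | p.2 + p.1 ∈ A ∧ p.1 ∈ B})
      ≤ B.indicator (fun _ => c) v := by
    intro v
    by_cases hv : v ∈ B
    · rw [indicator_of_mem hv]
      have hpre : Prod.mk v ⁻¹' {p : ℝ × ℝ | p.2 + p.1 ∈ A ∧ p.1 ∈ B} = {u | u + v ∈ A} := by
        ext u; simp [hv]
      rw [hpre, Measure.map_apply hU (by exact (measurable_id.add_const v) hA)]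
      exact hc v
    · rw [indicator_of_notMem hv]
      have hpre : Prod.mk v ⁻¹' {p : ℝ × ℝ | p.2 + p.1 ∈ A ∧ p.1 ∈ B} = ∅ := by
        ext u; simp [hv]
      rw [hpre, measure_empty]
  calc ∫⁻ v, (P.map U) (Prod.mk v ⁻¹' {p : ℝ × ℝ | p.2 + p.1 ∈ A ∧ p.1 ∈ B}) ∂(P.map V)
      ≤ ∫⁻ v, B.indicator (fun _ => c) v ∂(P.map V) := lintegral_mono h2
    _ = c * (P.map V) B := by rw [lintegral_indicator hB]; simp [mul_comm]
    _ = c * P (V ⁻¹' B) := by rw [Measure.map_apply hV hB]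


/-- A regulated (càdlàg) path has, on a compact interval, a finite set `F` and a scale `δ`
such that any small increment interval avoiding `F` has small increment. -/
lemma cadlag_small_increments (g : ℝ → ℝ) {α β : ℝ} (hαβ : α < β)
    (hr : ∀ t ∈ Icc α β, Tendsto g (𝓝[Ici t] t) (𝓝 (g t)))
    (hl : ∀ t ∈ Icc α β, ∃ L : ℝ, Tendsto g (𝓝[Iio t] t) (𝓝 L))
    {ρ : ℝ} (hρ : 0 < ρ) :
    ∃ (F : Finset ℝ) (δ : ℝ), 0 < δ ∧
      ∀ u v : ℝ, α ≤ u → u ≤ v → v ≤ β → v - u ≤ δ →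
        (∀ w ∈ F, w ∉ Ioc u v) → |g v - g u| < ρ := by
  classical
  -- choose local windows
  have hwin : ∀ t ∈ Icc α β, ∃ d : ℝ, 0 < d ∧
      (∀ s, t ≤ s → s < t + d → |g s - g t| < ρ/4) ∧
      (∀ s s', t - d < s → s < t → t - d < s' → s' < t → |g s - g s'| < ρ/2) := by
    intro t ht
    obtain ⟨d₁, hd₁, hd₁'⟩ : ∃ d₁ > 0, ∀ s, t ≤ s → s < t + d₁ → |g s - g t| < ρ/4 := by
      have := (hr t ht).eventually (Metric.ball_mem_nhds (g t) (show 0 < ρ/4 by positivity))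
      rw [eventually_nhdsWithin_iff, Metric.eventually_nhds_iff] at this
      obtain ⟨ε, hε, hb⟩ := this
      refine ⟨ε, hε, fun s hs hs' => ?_⟩
      have := hb (show dist s t < ε by rw [Real.dist_eq, abs_lt]; constructor <;> linarith) hs
      simpa [Real.dist_eq] using this
    obtain ⟨L, hL⟩ := hl t ht
    obtain ⟨d₂, hd₂, hd₂'⟩ : ∃ d₂ > 0, ∀ s, t - d₂ < s → s < t → |g s - L| < ρ/4 := by
      have := hL.eventually (Metric.ball_mem_nhds L (show 0 < ρ/4 by positivity))
      rw [eventually_nhdsWithin_iff, Metric.eventually_nhds_iff] at this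
      obtain ⟨ε, hε, hb⟩ := this
      refine ⟨ε, hε, fun s hs hs' => ?_⟩
      have := hb (show dist s t < ε by rw [Real.dist_eq, abs_lt]; constructor <;> linarith) hs'
      simpa [Real.dist_eq] using this
    refine ⟨min d₁ d₂, lt_min hd₁ hd₂, fun s hs hs' => hd₁' s hs
      (lt_of_lt_of_le hs' (by simp [min_le_left])), fun s s' h1 h2 h3 h4 => ?_⟩
    have e1 := hd₂' s (by have := min_le_right d₁ d₂; linarith) h2
    have e2 := hd₂' s' (by have := min_le_right d₁ d₂; linarith) h4
    calc |g s - g s'| ≤ |g s - L| + |L - g s'| := abs_sub_le _ _ _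
      _ < ρ/4 + ρ/4 := by rw [abs_sub_comm L (g s')]; exact add_lt_add e1 e2
      _ = ρ/2 := by ring
  choose! d hd hdr hdl using hwin
  -- compact cover
  have hcov : Icc α β ⊆ ⋃ t : Icc α β, Ioo ((t:ℝ) - d t / 2) ((t:ℝ) + d t / 2) := by
    intro y hy
    exact mem_iUnion.mpr ⟨⟨y, hy⟩, by
      have := hd y hy
      simp only [mem_Ioo]
      constructor <;> simp <;> linarith⟩
  obtain ⟨T, hT⟩ := isCompact_Icc.elim_finite_subcover
    (fun t : Icc α β => Ioo ((t:ℝ) - d t / 2) ((t:ℝ) + d t / 2)) (fun _ => isOpen_Ioo) hcov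
  have hTne : T.Nonempty := by
    by_contra hne
    rw [Finset.not_nonempty_iff_eq_empty] at hne
    have := hT (show α ∈ Icc α β by simp [le_of_lt hαβ])
    simp [hne] at this
  set δ : ℝ := T.inf' hTne (fun t => d t / 2) with hδ
  have hδpos : 0 < δ := by
    rw [hδ, Finset.lt_inf'_iff]
    intro b hb
    have := hd b b.2
    positivity
  refine ⟨T.image (fun t => (t:ℝ)), δ, hδpos, fun u v huα huv hvβ hδuv hF => ?_⟩
  have hu : u ∈ Icc α β := ⟨huα, le_trans huv hvβ⟩
  obtain ⟨t, htT, htu⟩ : ∃ t ∈ T, u ∈ Ioo ((t:ℝ) - d t / 2) ((t:ℝ) + d t / 2) := by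
    have := hT hu
    simp only [mem_iUnion, Finset.mem_coe] at this
    obtain ⟨t, ht, h⟩ := this
    exact ⟨t, ht, h⟩
  have hδt : δ ≤ d t / 2 := Finset.inf'_le _ htT
  obtain ⟨htu1, htu2⟩ := mem_Ioo.mp htu
  have hvt : v < (t:ℝ) + d t := by linarith
  rcases le_or_gt (t:ℝ) u with hc | hc
  · -- both in [t, t + d t)
    have e1 := hdr t t.2 u hc (by linarith)
    have e2 := hdr t t.2 v (le_trans hc huv) hvt
    calc |g v - g u| ≤ |g v - g t| + |g t - g u| := abs_sub_le _ _ _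
      _ < ρ/4 + ρ/4 := add_lt_add e2 (by rw [abs_sub_comm]; exact e1)
      _ < ρ := by linarith
  · -- t > u; since t ∉ Ioc u v and t > u, t > v
    have htnotin : (t:ℝ) ∉ Ioc u v := hF _ (by simp; exact ⟨t.2, htT⟩)
    have htv : v < (t:ℝ) := by
      by_contra hle
      exact htnotin ⟨hc, not_lt.mp hle⟩
    have := hdl t t.2 v u (by linarith) htv (by linarith) hc
    calc |g v - g u| < ρ/2 := this
      _ < ρ := by linarith


/-- On a compact interval, a càdlàg path has a uniformly bounded number of large
grid increments, once the grid is fine enough. -/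
lemma cadlag_count_bound (g : ℝ → ℝ) {α β : ℝ} (hαβ : α < β)
    (hr : ∀ t ∈ Icc α β, Tendsto g (𝓝[Ici t] t) (𝓝 (g t)))
    (hl : ∀ t ∈ Icc α β, ∃ L : ℝ, Tendsto g (𝓝[Iio t] t) (𝓝 L))
    {ρ : ℝ} (hρ : 0 < ρ) :
    ∃ K n₀ : ℕ, ∀ n : ℕ, n₀ ≤ n →
      ((Finset.univ.filter (fun i : Fin n =>
        ρ ≤ g (α + ((i:ℕ)+1) * ((β-α)/n)) - g (α + (i:ℕ) * ((β-α)/n)))).card < K) := by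
  classical
  obtain ⟨F, δ, hδ, hF⟩ := cadlag_small_increments g hαβ hr hl hρ
  refine ⟨F.card + 1, ⌈(β-α)/δ⌉₊ + 1, fun n hn => ?_⟩
  have hn0 : 0 < n := lt_of_lt_of_le (Nat.succ_pos _) hn
  have hn0' : (0:ℝ) < n := by exact_mod_cast hn0
  set h : ℝ := (β-α)/n with hh
  have hhpos : 0 < h := div_pos (by linarith) hn0'
  have hmesh : h ≤ δ := by
    rw [hh, div_le_iff₀ hn0']
    have h1 : (β-α)/δ ≤ ⌈(β-α)/δ⌉₊ := Nat.le_ceil _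
    have h2 : (⌈(β-α)/δ⌉₊ : ℝ) + 1 ≤ n := by exact_mod_cast hn
    rw [div_le_iff₀ hδ] at h1
    nlinarith
  have hgrid : ∀ i : Fin n, α ≤ α + (i:ℕ) * h ∧ α + ((i:ℕ)+1) * h ≤ β := by
    intro i
    constructor
    · nlinarith [Nat.cast_nonneg (α := ℝ) (i:ℕ), hhpos.le]
    · have : ((i:ℕ):ℝ) + 1 ≤ n := by
        have := i.2
        exact_mod_cast Nat.succ_le_of_lt this
      have hb : α + (n:ℝ) * h = β := by
        rw [hh]; field_simp; ring
      nlinarith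
  have hwit : ∀ i : Fin n, ρ ≤ g (α + ((i:ℕ)+1) * h) - g (α + (i:ℕ) * h) →
      ∃ w ∈ F, w ∈ Ioc (α + (i:ℕ) * h) (α + ((i:ℕ)+1) * h) := by
    intro i hi
    by_contra hcon
    push_neg at hcon
    have h2 := hF (α + (i:ℕ) * h) (α + ((i:ℕ)+1) * h) (hgrid i).1
      (by nlinarith [hhpos.le]) (hgrid i).2 (by rw [show (α + (((i:ℕ):ℝ)+1) * h) - (α + ((i:ℕ):ℝ) * h) = h from by ring]; exact hmesh) hcon
    have h3 := le_abs_self (g (α + ((i:ℕ)+1) * h) - g (α + (i:ℕ) * h))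
    linarith
  -- injective witness map
  set S := Finset.univ.filter (fun i : Fin n =>
      ρ ≤ g (α + ((i:ℕ)+1) * h) - g (α + (i:ℕ) * h)) with hS
  have hcard : S.card ≤ F.card := by
    have hSwit : ∀ i ∈ S, ∃ w ∈ F, w ∈ Ioc (α + (i:ℕ) * h) (α + ((i:ℕ)+1) * h) := by
      intro i hi
      rw [hS, Finset.mem_filter] at hi
      exact hwit i hi.2
    choose w hwF hwIoc using hSwit
    apply Finset.card_le_card_of_injOn (fun i => if hi : i ∈ S then w i hi else 0)
    · intro i hi
      simp only [hi, dif_pos]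
      have hi' : i ∈ S := by simpa using hi
      rw [dif_pos hi']; exact Finset.mem_coe.mpr (hwF i hi')
    · intro i hi j hj hij
      simp only [Finset.mem_coe] at hi hj
      simp only [hi, hj, dif_pos] at hij
      by_contra hne
      have hij' : (i:ℕ) ≠ (j:ℕ) := fun hc => hne (Fin.ext hc)
      -- wlog i < j
      rcases Nat.lt_or_ge (i:ℕ) (j:ℕ) with hlt | hge
      · have h1 := (hwIoc i hi).2
        have h2 := (hwIoc j hj).1
        have : ((i:ℕ):ℝ) + 1 ≤ ((j:ℕ):ℝ) := by exact_mod_cast hlt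
        rw [hij] at h1
        nlinarith [hhpos]
      · have hlt : (j:ℕ) < (i:ℕ) := by omega
        have h1 := (hwIoc j hj).2
        have h2 := (hwIoc i hi).1
        have : ((j:ℕ):ℝ) + 1 ≤ ((i:ℕ):ℝ) := by exact_mod_cast hlt
        rw [← hij] at h1
        nlinarith [hhpos]
  exact lt_of_le_of_lt hcard (Nat.lt_succ_self _)


variable {Ω : Type*} [MeasurableSpace Ω] {P : Measure Ω} [IsProbabilityMeasure P]
  {X : ℝ → Ω → ℝ}

/-- Evaluation form of stationarity. -/
lemma stat_eval (hX : IsLevyProcess P X) {s t : ℝ} (hs : 0 ≤ s) (hst : s ≤ t)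
    {B : Set ℝ} (hB : MeasurableSet B) :
    P {ω | X t ω - X s ω ∈ B} = P {ω | X (t - s) ω ∈ B} := by
  have h1 := hX.stationary s t hs hst
  have h2 : Measurable (fun ω => X t ω - X s ω) := (hX.measurable t).sub (hX.measurable s)
  have := congrArg (fun μ : Measure ℝ => μ B) h1
  simpa [Measure.map_apply h2 hB, Measure.map_apply (hX.measurable (t - s)) hB,
    preimage, mem_setOf_eq] using this

/-- The value at time `s` is independent of the increment over `[s, t]`. -/
lemma indep_incr (hX : IsLevyProcess P X) {s t : ℝ} (hs : 0 ≤ s) (hst : s ≤ t) :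
    IndepFun (X s) (fun ω => X t ω - X s ω) P := by
  have hmono : Monotone ![(0:ℝ), s, t] := by
    intro i j hij
    fin_cases i <;> fin_cases j <;> simp_all <;> linarith
  set u : Fin 3 → ℝ := ![0, s, t] with hu
  have h0 : 0 ≤ u 0 := by norm_num [hu]
  have h := hX.indep 2 u hmono h0
  have h2 := h.indepFun (i := 0) (j := 1) (by decide)
  have e1 : (fun ω => X (u (0:Fin 2).succ) ω - X (u (0:Fin 2).castSucc) ω)
      = fun ω => X s ω - X 0 ω := by
    have : (0:Fin 2).succ = (1 : Fin 3) := by decide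
    have : (0:Fin 2).castSucc = (0 : Fin 3) := by decide
    simp [hu, show ((0:Fin 2).succ : Fin 3) = 1 by decide,
      show ((0:Fin 2).castSucc : Fin 3) = 0 by decide]
  have e2 : (fun ω => X (u (1:Fin 2).succ) ω - X (u (1:Fin 2).castSucc) ω)
      = fun ω => X t ω - X s ω := by
    simp [hu, show ((1:Fin 2).succ : Fin 3) = 2 by decide,
      show ((1:Fin 2).castSucc : Fin 3) = 1 by decide]
  rw [e1, e2] at h2
  refine IndepFun.congr (show IndepFun (fun ω => X s ω - X 0 ω) (fun ω => X t ω - X s ω) P from h2) ?_ (by rfl)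
  filter_upwards [hX.init] with ω hω
  simp [hω]



/-- Uniform concentration bound for `X s`, `s ≥ α`, from atomlessness at time `α`. -/
lemma conc_levy (hX : IsLevyProcess P X) {α : ℝ} (hα : 0 < α)
    (hatom : ∀ x : ℝ, P {ω | X α ω = x} = 0) {c : ℝ≥0∞} (hc : 0 < c) :
    ∃ γ : ℝ, 0 < γ ∧ ∀ s : ℝ, α ≤ s → ∀ x : ℝ,
      P {ω | X s ω ∈ Icc (x - γ) (x + γ)} ≤ c := by
  set μ : Measure ℝ := P.map (X α) with hμ
  have : IsProbabilityMeasure μ := Measure.isProbabilityMeasure_map (hX.measurable α).aemeasurable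
  have hatom' : ∀ x : ℝ, μ {x} = 0 := by
    intro x
    rw [hμ, Measure.map_apply (hX.measurable α) (measurableSet_singleton x)]
    have : (X α) ⁻¹' {x} = {ω | X α ω = x} := rfl
    rw [this]; exact hatom x
  obtain ⟨γ, hγ, hconc⟩ := conc_of_atomless μ hatom' hc
  refine ⟨γ, hγ, fun s hs x => ?_⟩
  have hbase : ∀ y : ℝ, P {ω | X α ω ∈ Icc (y - γ) (y + γ)} ≤ c := by
    intro y
    have := hconc y
    rwa [hμ, Measure.map_apply (hX.measurable α) measurableSet_Icc] at this
  have hind := indep_incr hX hα.le hs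
  have hbound := indep_add_mem_bound P (hX.measurable α)
    ((hX.measurable s).sub (hX.measurable α)) hind
    (A := Icc (x - γ) (x + γ)) (B := univ) measurableSet_Icc MeasurableSet.univ
    (c := c) ?_
  · have hset : {ω | X α ω + (X s ω - X α ω) ∈ Icc (x - γ) (x + γ) ∧ X s ω - X α ω ∈ univ}
        = {ω | X s ω ∈ Icc (x - γ) (x + γ)} := by
      ext ω; simp [add_sub_cancel]
    simp only [Pi.sub_apply] at hbound; rw [hset] at hbound
    simpa using hbound
  · intro v
    have hset : (X α) ⁻¹' {u | u + v ∈ Icc (x - γ) (x + γ)}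
        = {ω | X α ω ∈ Icc ((x - v) - γ) ((x - v) + γ)} := by
      ext ω
      simp only [mem_preimage, mem_setOf_eq, mem_Icc]
      constructor <;> intro h <;> constructor <;> linarith [h.1, h.2]
    rw [hset]
    exact hbase (x - v)

/-- jump & position at right endpoint. -/
lemma pair_bound_right (hX : IsLevyProcess P X) {s t : ℝ} (hs : 0 ≤ s) (hst : s ≤ t)
    {A B : Set ℝ} (hA : MeasurableSet A) (hB : MeasurableSet B) {c : ℝ≥0∞}
    (hc : ∀ v : ℝ, P {ω | X s ω ∈ {u | u + v ∈ A}} ≤ c) :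
    P {ω | X t ω ∈ A ∧ X t ω - X s ω ∈ B} ≤ c * P {ω | X t ω - X s ω ∈ B} := by
  have hind := indep_incr hX hs hst
  have hbound := indep_add_mem_bound P (hX.measurable s)
    ((hX.measurable t).sub (hX.measurable s)) hind hA hB (c := c) (fun v => hc v)
  have hset : {ω | X s ω + (X t ω - X s ω) ∈ A ∧ X t ω - X s ω ∈ B}
      = {ω | X t ω ∈ A ∧ X t ω - X s ω ∈ B} := by
    ext ω; simp [add_sub_cancel]
  simp only [Pi.sub_apply] at hbound; rw [hset] at hbound
  exact hbound

/-- jump & position at left endpoint. -/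
lemma pair_bound_left (hX : IsLevyProcess P X) {s t : ℝ} (hs : 0 ≤ s) (hst : s ≤ t)
    {A B : Set ℝ} (hA : MeasurableSet A) (hB : MeasurableSet B) {c : ℝ≥0∞}
    (hc : P {ω | X s ω ∈ A} ≤ c) :
    P {ω | X s ω ∈ A ∧ X t ω - X s ω ∈ B} ≤ c * P {ω | X t ω - X s ω ∈ B} := by
  have hind := indep_incr hX hs hst
  have heq := hind.measure_inter_preimage_eq_mul A B hA hB
  have hset : {ω | X s ω ∈ A ∧ X t ω - X s ω ∈ B}
      = (X s) ⁻¹' A ∩ (fun ω => X t ω - X s ω) ⁻¹' B := rfl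
  rw [hset, heq]
  exact mul_le_mul_left hc _

/-- The increments over the uniform grid on `[α, β]`, as preimage identities. -/
lemma grid_prod (hX : IsLevyProcess P X) {α β : ℝ} (hα : 0 ≤ α) (hαβ : α < β)
    (n : ℕ) (S : Finset (Fin n)) {B : Set ℝ} (hB : MeasurableSet B) :
    P (⋂ i ∈ S, {ω | X (α + ((i:ℕ)+1) * ((β-α)/n)) ω - X (α + (i:ℕ) * ((β-α)/n)) ω ∈ B})
      = ∏ i ∈ S, P {ω | X (α + ((i:ℕ)+1) * ((β-α)/n)) ω - X (α + (i:ℕ) * ((β-α)/n)) ω ∈ B} := by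
  classical
  set h : ℝ := (β-α)/n with hh
  have hh0 : 0 ≤ h := by
    rcases Nat.eq_zero_or_pos n with h0 | h0
    · simp [hh, h0]
    · exact (div_pos (by linarith) (by exact_mod_cast h0)).le
  set u : Fin (n+1) → ℝ := fun i => α + (i:ℕ) * h with hu
  have hmono : Monotone u := by
    intro i j hij
    have : ((i:ℕ):ℝ) ≤ ((j:ℕ):ℝ) := by exact_mod_cast (Fin.le_def.mp hij)
    simp only [hu]
    nlinarith
  have h0 : 0 ≤ u 0 := by simp [hu, hα]
  have hind := hX.indep n u hmono h0
  have hfun : ∀ i : Fin n, (fun ω => X (u i.succ) ω - X (u i.castSucc) ω)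
      = fun ω => X (α + ((i:ℕ)+1) * h) ω - X (α + (i:ℕ) * h) ω := by
    intro i
    have e1 : u i.succ = α + ((i:ℕ)+1) * h := by
      simp only [hu, Fin.val_succ]; push_cast; ring
    have e2 : u i.castSucc = α + ((i:ℕ)) * h := by
      simp only [hu, Fin.coe_castSucc]
    rw [e1, e2]
  have := hind.meas_biInter (S := S)
    (s := fun i => {ω | X (α + ((i:ℕ)+1) * h) ω - X (α + (i:ℕ) * h) ω ∈ B}) ?_
  · exact this
  · intro i _
    refine ⟨B, hB, ?_⟩
    rw [hfun i]
    rfl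

/-- The key tightness estimate: along some subsequence, `n · P(X_{(β-α)/n} ≥ ρ)` stays
bounded. -/
lemma jump_rate (hX : IsLevyProcess P X) {α β ρ : ℝ} (hα : 0 < α) (hαβ : α < β)
    (hρ : 0 < ρ) :
    ∃ C : ℝ≥0∞, C ≠ ⊤ ∧ ∀ m : ℕ, ∃ n : ℕ, m ≤ n ∧
      (n : ℝ≥0∞) * P {ω | X ((β-α)/n) ω ∈ Ici ρ} ≤ C := by
  classical
  by_contra hcon
  push_neg at hcon
  -- notation
  set p : ℕ → ℝ≥0∞ := fun n => P {ω | X ((β-α)/n) ω ∈ Ici ρ} with hp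
  have hcon' : ∀ c : ℝ, ∃ m₀ : ℕ, ∀ n : ℕ, m₀ ≤ n → ENNReal.ofReal c < n * p n := by
    intro c
    obtain ⟨m₀, hm₀⟩ := hcon (ENNReal.ofReal c) ENNReal.ofReal_ne_top
    exact ⟨m₀, hm₀⟩
  -- the grid increment sets
  set Δ : ∀ n : ℕ, Fin n → Ω → ℝ :=
    fun n i ω => X (α + ((i:ℕ)+1) * ((β-α)/n)) ω - X (α + (i:ℕ) * ((β-α)/n)) ω with hΔ
  set NC : ∀ n : ℕ, Ω → ℕ :=
    fun n ω => (Finset.univ.filter (fun i : Fin n => ρ ≤ Δ n i ω)).card with hNC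
  -- each grid increment has the law of X_{(β-α)/n}
  have hlaw : ∀ n : ℕ, 0 < n → ∀ i : Fin n, ∀ B : Set ℝ, MeasurableSet B →
      P {ω | Δ n i ω ∈ B} = P {ω | X ((β-α)/n) ω ∈ B} := by
    intro n hn i B hB
    have hn' : (0:ℝ) < n := by exact_mod_cast hn
    have hs : (0:ℝ) ≤ α + (i:ℕ) * ((β-α)/n) := by
      have : (0:ℝ) ≤ ((i:ℕ):ℝ) * ((β-α)/n) :=
        mul_nonneg (Nat.cast_nonneg _) (div_pos (by linarith) hn').le
      linarith
    have hst : α + (i:ℕ) * ((β-α)/n) ≤ α + ((i:ℕ)+1) * ((β-α)/n) := by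
      have : (0:ℝ) ≤ (β-α)/n := (div_pos (by linarith) hn').le
      nlinarith
    have := stat_eval hX hs hst hB
    rw [show α + (((i:ℕ):ℝ)+1) * ((β-α)/n) - (α + ((i:ℕ):ℝ) * ((β-α)/n)) = (β-α)/n
      from by ring] at this
    exact this
  -- block bound : P(N_n < K) ≤ K * q_n ^ (n / K)
  have hblock : ∀ K n : ℕ, 0 < K → K ≤ n →
      P {ω | NC n ω < K} ≤ (K : ℝ≥0∞) * (P {ω | X ((β-α)/n) ω ∈ Iio ρ}) ^ (n / K) := by
    intro K n hK hKn
    set s : ℕ := n / K with hsdef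
    have hs1 : 1 ≤ s := (Nat.one_le_div_iff hK).mpr hKn
    have hsub : ∀ j : Fin K, ∀ m ∈ Finset.Ico ((j:ℕ)*s) (((j:ℕ)+1)*s), m < n := by
      intro j m hm
      have h1 := (Finset.mem_Ico.mp hm).2
      have h2 : ((j:ℕ)+1) * s ≤ K * s := Nat.mul_le_mul_right s j.2
      have h3 : K * s ≤ n := by
        rw [hsdef, mul_comm]
        exact Nat.div_mul_le_self n K
      omega
    set Blk : Fin K → Finset (Fin n) :=
      fun j => (Finset.Ico ((j:ℕ)*s) (((j:ℕ)+1)*s)).attachFin (hsub j) with hBlk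
    have hBlkcard : ∀ j, (Blk j).card = s := by
      intro j
      rw [hBlk]
      rw [Finset.card_attachFin, Nat.card_Ico, Nat.add_mul, one_mul]
      omega
    -- inclusion
    have hincl : {ω | NC n ω < K} ⊆ ⋃ j : Fin K, ⋂ i ∈ Blk j, {ω | Δ n i ω ∈ Iio ρ} := by
      intro ω hω
      by_contra hnot
      simp only [mem_iUnion, mem_iInter, not_exists, not_forall] at hnot
      have hch : ∀ j : Fin K, ∃ i : Fin n, i ∈ Blk j ∧ ρ ≤ Δ n i ω := by
        intro j
        obtain ⟨i, hi1, hi2⟩ := hnot j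
        exact ⟨i, hi1, by simpa [not_lt] using hi2⟩
      choose e he1 he2 using hch
      have hinj : Set.InjOn e (Finset.univ : Finset (Fin K)) := by
        intro j _ j' _ hjj
        by_contra hne
        have hv : (e j : ℕ) ∈ Finset.Ico ((j:ℕ)*s) (((j:ℕ)+1)*s) := by
          have := he1 j
          rw [hBlk, Finset.mem_attachFin] at this
          exact this
        have hv' : (e j' : ℕ) ∈ Finset.Ico ((j':ℕ)*s) (((j':ℕ)+1)*s) := by
          have := he1 j'
          rw [hBlk, Finset.mem_attachFin] at this
          exact this
        rw [hjj] at hv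
        rw [Finset.mem_Ico] at hv hv'
        have hjne : (j:ℕ) ≠ (j':ℕ) := fun hc => hne (Fin.ext hc)
        rcases Nat.lt_or_ge (j:ℕ) (j':ℕ) with hlt | hge
        · have : ((j:ℕ)+1) * s ≤ (j':ℕ) * s := Nat.mul_le_mul_right s hlt
          omega
        · have hlt : (j':ℕ) < (j:ℕ) := by omega
          have : ((j':ℕ)+1) * s ≤ (j:ℕ) * s := Nat.mul_le_mul_right s hlt
          omega
      have hcard : K ≤ NC n ω := by
        have h1 : (Finset.univ : Finset (Fin K)).card ≤
            (Finset.univ.filter (fun i : Fin n => ρ ≤ Δ n i ω)).card := by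
          apply Finset.card_le_card_of_injOn e
          · intro j _
            simp only [Finset.mem_coe, Finset.mem_filter, Finset.mem_univ, true_and]
            exact he2 j
          · exact hinj
        simpa [hNC] using h1
      simp only [mem_setOf_eq] at hω
      omega
    refine le_trans (le_trans (measure_mono hincl) (measure_iUnion_fintype_le _ _)) (le_of_eq ?_)
    have hjbound : ∀ j : Fin K, P (⋂ i ∈ Blk j, {ω | Δ n i ω ∈ Iio ρ})
        = (P {ω | X ((β-α)/n) ω ∈ Iio ρ}) ^ s := by
      intro j
      have := grid_prod hX hα.le hαβ n (Blk j) (B := Iio ρ) measurableSet_Iio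
      rw [hΔ]
      rw [this]
      have : ∀ i ∈ Blk j, P {ω | X (α + ((i:ℕ)+1) * ((β-α)/n)) ω
          - X (α + (i:ℕ) * ((β-α)/n)) ω ∈ Iio ρ} = P {ω | X ((β-α)/n) ω ∈ Iio ρ} := by
        intro i _
        exact hlaw n (lt_of_lt_of_le hK hKn) i _ measurableSet_Iio
      rw [Finset.prod_congr rfl this, Finset.prod_const, hBlkcard j]
    calc ∑ j : Fin K, P (⋂ i ∈ Blk j, {ω | Δ n i ω ∈ Iio ρ})
        = ∑ _j : Fin K, (P {ω | X ((β-α)/n) ω ∈ Iio ρ}) ^ s := by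
          exact Finset.sum_congr rfl (fun j _ => hjbound j)
      _ = (K : ℝ≥0∞) * (P {ω | X ((β-α)/n) ω ∈ Iio ρ}) ^ s := by
          rw [Finset.sum_const, Finset.card_univ, Fintype.card_fin, nsmul_eq_mul]
  -- quantitative smallness
  have hsmall : ∀ K : ℕ, 0 < K → ∀ ζr : ℝ, 0 < ζr → ∀ m : ℕ, ∃ n : ℕ, m ≤ n ∧
      P {ω | NC n ω < K} ≤ ENNReal.ofReal ζr := by
    intro K hK ζr hζ m
    have hKR : (0:ℝ) < K := by exact_mod_cast hK
    set c : ℝ := max 1 (2*K*(Real.log ((K:ℝ)/ζr) + 1)) with hc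
    have hcpos : 0 < c := lt_of_lt_of_le one_pos (le_max_left _ _)
    have hcbound : (K:ℝ) * Real.exp (-(c/(2*K))) < ζr := by
      have hxpos : (0:ℝ) < (K:ℝ)/ζr := by positivity
      have h1 : 2*K*(Real.log ((K:ℝ)/ζr) + 1) ≤ c := le_max_right _ _
      have h2 : Real.log ((K:ℝ)/ζr) + 1 ≤ c/(2*K) := by
        rw [le_div_iff₀ (by positivity)]
        nlinarith
      have h3 : Real.exp (-(c/(2*K))) ≤ Real.exp (-(Real.log ((K:ℝ)/ζr) + 1)) :=
        Real.exp_le_exp.mpr (by linarith)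
      have h4 : Real.exp (-(Real.log ((K:ℝ)/ζr) + 1))
          = (ζr/(K:ℝ)) * Real.exp (-1) := by
        rw [show -(Real.log ((K:ℝ)/ζr) + 1) = -Real.log ((K:ℝ)/ζr) + (-1) from by ring,
          Real.exp_add, Real.exp_neg, Real.exp_log hxpos]
        field_simp
      have h5 : Real.exp (-1) < 1 := by
        rw [Real.exp_lt_one_iff]; norm_num
      calc (K:ℝ) * Real.exp (-(c/(2*K))) ≤ (K:ℝ) * ((ζr/(K:ℝ)) * Real.exp (-1)) := by
            rw [← h4]; exact mul_le_mul_of_nonneg_left h3 hKR.le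
        _ = ζr * Real.exp (-1) := by field_simp
        _ < ζr := by nlinarith
    obtain ⟨m₀, hm₀⟩ := hcon' c
    set n : ℕ := max (max m m₀) (2*K) with hn
    have hmn : m ≤ n := le_trans (le_max_left _ _) (le_max_left _ _)
    have hm₀n : m₀ ≤ n := le_trans (le_max_right _ _) (le_max_left _ _)
    have h2Kn : 2*K ≤ n := le_max_right _ _
    have hKn : K ≤ n := le_trans (by omega) h2Kn
    have hnpos : 0 < n := lt_of_lt_of_le (by omega) hKn
    have hnR : (0:ℝ) < n := by exact_mod_cast hnpos
    refine ⟨n, hmn, ?_⟩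
    set q : ℝ≥0∞ := P {ω | X ((β-α)/n) ω ∈ Iio ρ} with hq
    have hqcompl : {ω | X ((β-α)/n) ω ∈ Iio ρ} = {ω | X ((β-α)/n) ω ∈ Ici ρ}ᶜ := by
      ext ω; simp [not_le]
    have hmeas : MeasurableSet {ω | X ((β-α)/n) ω ∈ Ici ρ} :=
      hX.measurable _ measurableSet_Ici
    have hq1 : q = 1 - p n := by
      rw [hq, hqcompl, prob_compl_eq_one_sub hmeas]
    set pr : ℝ := (p n).toReal with hpr
    have hple : p n ≤ 1 := prob_le_one
    have hpfin : p n ≠ ⊤ := ne_top_of_le_ne_top ENNReal.one_ne_top hple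
    have hpr1 : pr ≤ 1 := by
      rw [hpr]
      exact ENNReal.toReal_le_of_le_ofReal zero_le_one (by simpa using hple)
    have hprpos : c/(n:ℝ) < pr := by
      have h1 := hm₀ n hm₀n
      have hfin : (n:ℝ≥0∞) * p n ≠ ⊤ := ENNReal.mul_ne_top (ENNReal.natCast_ne_top n) hpfin
      have h2 : c < ((n:ℝ≥0∞) * p n).toReal :=
        (ENNReal.ofReal_lt_iff_lt_toReal hcpos.le hfin).mp h1
      rw [ENNReal.toReal_mul, ENNReal.toReal_natCast] at h2
      rw [div_lt_iff₀ hnR]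
      linarith [h2]
    have hprnn : 0 ≤ pr := ENNReal.toReal_nonneg
    set qr : ℝ := 1 - pr with hqr
    have hqtoReal : q.toReal = qr := by
      rw [hq1, hqr, ENNReal.toReal_sub_of_le hple ENNReal.one_ne_top, ENNReal.toReal_one, hpr]
    have hqfin : q ≠ ⊤ := ne_top_of_le_ne_top ENNReal.one_ne_top (by rw [hq1]; exact tsub_le_self.trans (le_refl _) |>.trans (by simp))
    have hqofReal : q = ENNReal.ofReal qr := by
      rw [← hqtoReal, ENNReal.ofReal_toReal hqfin]
    set s : ℕ := n / K with hsdef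
    -- real bound
    have hreal : (K:ℝ) * qr ^ s ≤ ζr := by
      have hqrexp : qr ≤ Real.exp (-pr) := by
        have := Real.add_one_le_exp (-pr); linarith
      have hqrnn : 0 ≤ qr := by rw [← hqtoReal]; exact ENNReal.toReal_nonneg
      have h1 : qr ^ s ≤ Real.exp (-pr) ^ s := pow_le_pow_left₀ hqrnn hqrexp s
      have h2 : Real.exp (-pr) ^ s = Real.exp (-(pr * s)) := by
        rw [← Real.exp_nat_mul]; ring_nf
      have hsn : (n:ℝ)/(2*K) ≤ (s:ℕ) := by
        have hmod := Nat.div_add_mod n K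
        have hmodlt : n % K < K := Nat.mod_lt n hK
        have e1 : (n:ℝ) = (K:ℝ) * s + (n % K : ℕ) := by
          exact_mod_cast (congrArg (Nat.cast (R := ℝ)) hmod).symm
        have e2 : ((n % K : ℕ):ℝ) < K := by exact_mod_cast hmodlt
        have e3 : (2*K:ℝ) ≤ n := by exact_mod_cast h2Kn
        rw [div_le_iff₀ (by positivity)]
        nlinarith
      have hps : c/(2*K) ≤ pr * s := by
        have hs0 : (0:ℝ) ≤ s := Nat.cast_nonneg _
        have h3 : c/(n:ℝ) * ((n:ℝ)/(2*K)) = c/(2*K) := by field_simp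
        have h4 : c/(n:ℝ) * ((n:ℝ)/(2*K)) ≤ pr * s := by
          apply mul_le_mul hprpos.le hsn (by positivity) hprnn
        linarith
      have h5 : Real.exp (-(pr*s)) ≤ Real.exp (-(c/(2*K))) :=
        Real.exp_le_exp.mpr (by linarith)
      calc (K:ℝ) * qr ^ s ≤ (K:ℝ) * Real.exp (-(pr*s)) := by
            rw [← h2]; exact mul_le_mul_of_nonneg_left h1 hKR.le
        _ ≤ (K:ℝ) * Real.exp (-(c/(2*K))) := mul_le_mul_of_nonneg_left h5 hKR.le
        _ ≤ ζr := hcbound.le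
    calc P {ω | NC n ω < K} ≤ (K : ℝ≥0∞) * q ^ s := hblock K n hK hKn
      _ = ENNReal.ofReal ((K:ℝ) * qr ^ s) := by
          rw [hqofReal, ← ENNReal.ofReal_pow (by rw [← hqtoReal]; exact ENNReal.toReal_nonneg),
            ← ENNReal.ofReal_natCast K, ← ENNReal.ofReal_mul (Nat.cast_nonneg _)]
      _ ≤ ENNReal.ofReal ζr := ENNReal.ofReal_le_ofReal hreal
  -- tail sets are null
  have htail : ∀ K m : ℕ, P (⋂ (n) (_ : m ≤ n), {ω | NC n ω < K}) = 0 := by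
    intro K m
    rcases Nat.eq_zero_or_pos K with hK0 | hK
    · have : (⋂ (n) (_ : m ≤ n), {ω | NC n ω < K}) ⊆ {ω | NC m ω < K} :=
        iInter₂_subset m (le_refl m)
      refine le_antisymm (le_trans (measure_mono this) ?_) (zero_le)
      rw [hK0]
      simp
    · refine le_antisymm ?_ (zero_le)
      have hb : ∀ l : ℕ, P (⋂ (n) (_ : m ≤ n), {ω | NC n ω < K})
          ≤ ENNReal.ofReal (1/(l+1)) := by
        intro l
        obtain ⟨n, hmn, hle⟩ := hsmall K hK (1/(l+1)) (by positivity) m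
        exact le_trans (measure_mono (iInter₂_subset n hmn)) hle
      have hlim : Tendsto (fun l : ℕ => ENNReal.ofReal (1/(l+1))) atTop (𝓝 0) := by
        rw [show (0:ℝ≥0∞) = ENNReal.ofReal 0 from by simp]
        apply ENNReal.tendsto_ofReal
        exact tendsto_one_div_add_atTop_nhds_zero_nat
      exact ge_of_tendsto hlim (Eventually.of_forall hb)
  -- the union over m and K is everything, contradiction
  have hU : P (⋃ K : ℕ, ⋃ m : ℕ, ⋂ (n) (_ : m ≤ n), {ω | NC n ω < K}) = 0 := by
    refine le_antisymm (le_trans (measure_iUnion_le _) ?_) (zero_le)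
    have : ∀ K : ℕ, P (⋃ m : ℕ, ⋂ (n) (_ : m ≤ n), {ω | NC n ω < K}) = 0 := by
      intro K
      refine le_antisymm (le_trans (measure_iUnion_le _) ?_) (zero_le)
      simp [htail K]
    simp [this]
  have hUuniv : (⋃ K : ℕ, ⋃ m : ℕ, ⋂ (n) (_ : m ≤ n), {ω | NC n ω < K}) = univ := by
    rw [eq_univ_iff_forall]
    intro ω
    obtain ⟨K₀, n₀, hKn₀⟩ := cadlag_count_bound (fun s => X s ω) hαβ
      (fun t ht => hX.right_cont ω t (by linarith [ht.1, hα]))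
      (fun t ht => ⟨_, hX.left_lim ω t (lt_of_lt_of_le hα ht.1)⟩) hρ
    simp only [mem_iUnion, mem_iInter]
    exact ⟨K₀, n₀, fun n hn => hKn₀ n hn⟩
  rw [hUuniv] at hU
  simpa using hU


set_option maxHeartbeats 1600000 in
/-- The process a.s. has no jump landing on, or departing from, the graph of `f`,
anywhere in `[a, M]`. -/
lemma bad_null (hX : IsLevyProcess P X)
    (hatomless : ∀ t : ℝ, 0 < t → ∀ x : ℝ, P {ω | X t ω = x} = 0)
    {f : ℝ → ℝ} (hf_cont : ContinuousOn f (Ioi 0)) (hf_mono : MonotoneOn f (Ioi 0))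
    {a M : ℝ} (ha : 0 < a) (haM : a < M) :
    P {ω | ∃ t, t ∈ Icc a M ∧ leftLim (fun s => X s ω) t < X t ω ∧
        (X t ω = f t ∨ leftLim (fun s => X s ω) t = f t)} = 0 := by
  classical
  set α : ℝ := a/2 with hαdef
  set β : ℝ := M+1 with hβdef
  have hα : 0 < α := by rw [hαdef]; linarith
  have hαβ : α < β := by rw [hαdef, hβdef]; linarith
  have haα : α < a := by rw [hαdef]; linarith
  have hMβ : M < β := by rw [hβdef]; linarith
  set hh : ℕ → ℝ := fun n => (β-α)/n with hhdef
  set gp : ℕ → ℕ → ℝ := fun n i => α + i * hh n with hgp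
  set II : ℕ → ℕ → ℕ → Set ℝ :=
    fun n i j => Icc (f (gp n i) - 1/(j+1)) (f (gp n (i+1)) + 1/(j+1)) with hII
  set D : ℕ → ℕ → ℕ → Set Ω := fun n j k =>
    ⋃ i : Fin n, ({ω | X (gp n ((i:ℕ)+1)) ω - X (gp n (i:ℕ)) ω ∈ Ici (1/((k:ℝ)+1)/2)}
      ∩ ({ω | X (gp n ((i:ℕ)+1)) ω ∈ II n (i:ℕ) j}
        ∪ {ω | X (gp n (i:ℕ)) ω ∈ II n (i:ℕ) j})) with hD
  set G : ℕ → Set Ω := fun k => ⋂ j : ℕ, ⋃ m : ℕ, ⋂ (n) (_ : m ≤ n), D n j k with hG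
  have hhpos : ∀ n : ℕ, 0 < n → 0 < hh n := by
    intro n hn
    exact div_pos (by linarith) (by exact_mod_cast hn)
  -- grid points are in [α, β] and positive
  have hgp_mem : ∀ n : ℕ, ∀ i : ℕ, (i:ℕ) ≤ n → gp n i ∈ Icc α β := by
    intro n i hin
    rcases Nat.eq_zero_or_pos n with h0 | h0
    · subst h0
      interval_cases i
      simp only [hgp, Nat.cast_zero, zero_mul, add_zero]
      exact ⟨le_refl _, hαβ.le⟩
    · have hpos := hhpos n h0
      have hnR : (0:ℝ) < n := by exact_mod_cast h0
      constructor
      · have : (0:ℝ) ≤ (i:ℝ) * hh n := mul_nonneg (Nat.cast_nonneg _) hpos.le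
        simp only [hgp]; linarith
      · have hiR : (i:ℝ) ≤ n := by exact_mod_cast hin
        have : (i:ℝ) * hh n ≤ n * hh n := mul_le_mul_of_nonneg_right hiR hpos.le
        have hβeq : α + (n:ℝ) * hh n = β := by
          simp only [hhdef]; field_simp; ring
        simp only [hgp]; linarith
  -- Part 1: pathwise containment
  have hsubset : {ω | ∃ t, t ∈ Icc a M ∧ leftLim (fun s => X s ω) t < X t ω ∧
      (X t ω = f t ∨ leftLim (fun s => X s ω) t = f t)} ⊆ ⋃ k : ℕ, G k := by
    intro ω hω
    obtain ⟨t, ht, hjump, hor⟩ := hω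
    set g : ℝ → ℝ := fun s => X s ω with hgdef
    set L : ℝ := leftLim g t with hLdef
    set d : ℝ := g t - L with hddef
    have hd : 0 < d := by rw [hddef]; simp only [hLdef]; linarith [hjump]
    obtain ⟨k, hk⟩ := exists_nat_gt (1/d)
    have hεd : 1/((k:ℝ)+1) ≤ d := by
      have hk0 : (0:ℝ) < k + 1 := by positivity
      rw [div_le_iff₀ hk0]
      rw [div_lt_iff₀ hd] at hk
      nlinarith
    have hεpos : (0:ℝ) < 1/((k:ℝ)+1) := by positivity
    set ε : ℝ := 1/((k:ℝ)+1) with hεdef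
    refine mem_iUnion.mpr ⟨k, ?_⟩
    rw [hG]
    refine mem_iInter.mpr (fun j => ?_)
    set η : ℝ := 1/((j:ℝ)+1) with hηdef
    have hηpos : 0 < η := by positivity
    set γ' : ℝ := min η (ε/4) with hγ'def
    have hγ'pos : 0 < γ' := lt_min hηpos (by positivity)
    -- right continuity at t
    have hta : 0 < t := lt_of_lt_of_le ha ht.1
    obtain ⟨δ₁, hδ₁, hδ₁'⟩ : ∃ δ₁ > 0, ∀ s, t ≤ s → s - t < δ₁ → |g s - g t| < γ' := by
      have := (hX.right_cont ω t hta.le).eventually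
        (Metric.ball_mem_nhds (X t ω) hγ'pos)
      rw [eventually_nhdsWithin_iff, Metric.eventually_nhds_iff] at this
      obtain ⟨δ, hδ, hb⟩ := this
      refine ⟨δ, hδ, fun s hs hs' => ?_⟩
      have := hb (show dist s t < δ by rw [Real.dist_eq, abs_lt]; constructor <;> linarith) hs
      simpa [Real.dist_eq, hgdef] using this
    obtain ⟨δ₂, hδ₂, hδ₂'⟩ : ∃ δ₂ > 0, ∀ s, s < t → t - s < δ₂ → |g s - L| < γ' := by
      have := (hX.left_lim ω t hta).eventually (Metric.ball_mem_nhds _ hγ'pos)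
      rw [eventually_nhdsWithin_iff, Metric.eventually_nhds_iff] at this
      obtain ⟨δ, hδ, hb⟩ := this
      refine ⟨δ, hδ, fun s hs hs' => ?_⟩
      have := hb (show dist s t < δ by rw [Real.dist_eq, abs_lt]; constructor <;> linarith)
        (show s ∈ Iio t from hs)
      simpa [Real.dist_eq, hgdef, hLdef] using this
    set δm : ℝ := min δ₁ δ₂ with hδm
    have hδmpos : 0 < δm := lt_min hδ₁ hδ₂
    obtain ⟨m₁, hm₁⟩ := exists_nat_gt ((β-α)/δm)
    refine mem_iUnion.mpr ⟨m₁ + 1, mem_iInter.mpr (fun n => mem_iInter.mpr (fun hn => ?_))⟩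
    -- now n ≥ m₁ + 1 ≥ 1
    have hn1 : 1 ≤ n := le_trans (Nat.le_add_left 1 m₁) hn
    have hnpos : 0 < n := hn1
    have hnR : (0:ℝ) < n := by exact_mod_cast hnpos
    have hmesh : hh n < δm := by
      rw [hhdef, div_lt_iff₀ hnR]
      have h1 : ((m₁:ℝ)+1) ≤ n := by exact_mod_cast hn
      rw [div_lt_iff₀ hδmpos] at hm₁
      nlinarith
    have hhp := hhpos n hnpos
    -- the straddling index
    set r : ℝ := (t - α)/(hh n) with hrdef
    have hrpos : 0 < r := div_pos (by linarith [ht.1]) hhp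
    have hceil1 : 1 ≤ ⌈r⌉₊ := Nat.one_le_iff_ne_zero.mpr (by
      intro hc
      have := Nat.ceil_eq_zero.mp hc
      linarith)
    set i₀ : ℕ := ⌈r⌉₊ - 1 with hi₀def
    have hi₀cast : (i₀:ℝ) = (⌈r⌉₊:ℝ) - 1 := by
      rw [hi₀def]
      have : (1:ℕ) ≤ ⌈r⌉₊ := hceil1
      push_cast [Nat.cast_sub this]
      ring
    have hi₀lt : (i₀:ℝ) < r := by
      rw [hi₀cast]
      have := Nat.ceil_lt_add_one hrpos.le
      linarith
    have hi₀ge : r ≤ (i₀:ℝ) + 1 := by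
      rw [hi₀cast]
      have := Nat.le_ceil r
      linarith
    have hi₀n : i₀ < n := by
      have h1 : r < n := by
        rw [hrdef, div_lt_iff₀ hhp]
        have hβeq : α + (n:ℝ) * hh n = β := by
          simp only [hhdef]; field_simp; ring
        have : t < β := lt_of_le_of_lt ht.2 hMβ
        nlinarith
      have : (i₀:ℝ) < n := lt_trans hi₀lt h1
      exact_mod_cast this
    -- grid points around t
    have hti : gp n i₀ < t := by
      have : (i₀:ℝ) * hh n < r * hh n := mul_lt_mul_of_pos_right hi₀lt hhp
      have hreq : α + r * hh n = t := by
        rw [hrdef]; field_simp; ring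
      simp only [hgp]; linarith
    have hti1 : t ≤ gp n (i₀+1) := by
      have : r * hh n ≤ ((i₀:ℝ)+1) * hh n := mul_le_mul_of_nonneg_right hi₀ge hhp.le
      have hreq : α + r * hh n = t := by
        rw [hrdef]; field_simp; ring
      simp only [hgp]; push_cast; linarith
    have htigap : t - gp n i₀ < δ₂ := by
      have h1 : t - gp n i₀ ≤ hh n := by
        have hreq : α + r * hh n = t := by rw [hrdef]; field_simp; ring
        have : r * hh n ≤ ((i₀:ℝ)+1) * hh n := mul_le_mul_of_nonneg_right hi₀ge hhp.le
        simp only [hgp]; nlinarith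
      have := min_le_right δ₁ δ₂
      rw [hδm] at hmesh
      linarith [min_le_right δ₁ δ₂]
    have hti1gap : gp n (i₀+1) - t < δ₁ := by
      have h1 : gp n (i₀+1) - t ≤ hh n := by
        have hreq : α + r * hh n = t := by rw [hrdef]; field_simp; ring
        have : (i₀:ℝ) * hh n < r * hh n := mul_lt_mul_of_pos_right hi₀lt hhp
        simp only [hgp]; push_cast; nlinarith
      rw [hδm] at hmesh
      linarith [min_le_left δ₁ δ₂]
    -- estimates at the two grid points
    have hXti1 : |g (gp n (i₀+1)) - g t| < γ' := hδ₁' _ hti1 (by linarith)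
    have hXti : |g (gp n i₀) - L| < γ' := hδ₂' _ hti (by linarith)
    -- jump size
    have hjmp : ε/2 ≤ g (gp n (i₀+1)) - g (gp n i₀) := by
      rw [abs_lt] at hXti1 hXti
      have hγ'ε : γ' ≤ ε/4 := min_le_right _ _
      have : d - 2*γ' ≥ ε - ε/2 := by
        rw [hddef] at *
        have := hεd
        rw [hεdef] at *
        nlinarith
      rw [hddef] at this
      nlinarith [hXti1.1, hXti1.2, hXti.1, hXti.2]
    -- f monotone facts
    have hgpposi : 0 < gp n i₀ := lt_of_lt_of_le hα (hgp_mem n i₀ (le_of_lt hi₀n)).1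
    have hgpposi1 : 0 < gp n (i₀+1) := lt_of_lt_of_le hα (hgp_mem n (i₀+1) hi₀n).1
    have hfi : f (gp n i₀) ≤ f t := hf_mono hgpposi hta hti.le
    have hfi1 : f t ≤ f (gp n (i₀+1)) := hf_mono hta hgpposi1 hti1
    have hγ'η : γ' ≤ η := min_le_left _ _
    -- membership
    refine mem_iUnion.mpr ⟨⟨i₀, hi₀n⟩, ?_⟩
    constructor
    · show g (gp n (i₀+1)) - g (gp n i₀) ∈ Ici (1/((k:ℝ)+1)/2)
      rw [mem_Ici]
      exact hjmp
    · rcases hor with hcase | hcase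
      · left
        show g (gp n (i₀+1)) ∈ II n i₀ j
        rw [hII, mem_Icc]
        rw [abs_lt] at hXti1
        constructor
        · have : g t = f t := hcase
          simp only [hηdef] at *
          nlinarith [hXti1.1]
        · have : g t = f t := hcase
          simp only [hηdef] at *
          nlinarith [hXti1.2]
      · right
        show g (gp n i₀) ∈ II n i₀ j
        rw [hII, mem_Icc]
        rw [abs_lt] at hXti
        have hLf : L = f t := hcase
        constructor
        · simp only [hηdef] at *
          nlinarith [hXti.1]
        · simp only [hηdef] at *
          nlinarith [hXti.2]
  -- Part 2: each G k is null
  have hGnull : ∀ k : ℕ, P (G k) = 0 := by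
    intro k
    set ε : ℝ := 1/((k:ℝ)+1) with hεdef
    have hεpos : 0 < ε := by positivity
    obtain ⟨C, hCfin, hCseq⟩ := jump_rate hX (ρ := ε/2) hα hαβ (by positivity)
    -- bound P (G k) ≤ 2 * C * c for every c = ofReal (1/(l+1))
    have hbound : ∀ l : ℕ, P (G k) ≤ 2 * C * ENNReal.ofReal (1/((l:ℝ)+1)) := by
      intro l
      set c : ℝ≥0∞ := ENNReal.ofReal (1/((l:ℝ)+1)) with hcdef
      have hcpos : 0 < c := by
        rw [hcdef]
        exact ENNReal.ofReal_pos.mpr (by positivity)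
      obtain ⟨γ, hγpos, hγ⟩ := conc_levy hX hα (hatomless α hα) hcpos
      -- uniform continuity of f on [α, β]
      obtain ⟨δu, hδu, hδu'⟩ : ∃ δu > 0, ∀ x ∈ Icc α β, ∀ y ∈ Icc α β,
          dist x y < δu → dist (f x) (f y) < γ/2 := by
        have hcompact : IsCompact (Icc α β) := isCompact_Icc
        have hcont : ContinuousOn f (Icc α β) :=
          hf_cont.mono (fun x hx => lt_of_lt_of_le hα hx.1)
        have := hcompact.uniformContinuousOn_of_continuous hcont
        rw [Metric.uniformContinuousOn_iff] at this
        obtain ⟨δu, hδu, hb⟩ := this (γ/2) (by positivity)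
        exact ⟨δu, hδu, fun x hx y hy hxy => hb x hx y hy hxy⟩
      -- choose j
      obtain ⟨j, hj⟩ := exists_nat_gt (2/γ)
      have hηγ : 1/((j:ℝ)+1) ≤ γ/2 := by
        have h0 : (0:ℝ) < (j:ℝ)+1 := by positivity
        rw [div_le_iff₀ h0]
        rw [div_lt_iff₀ hγpos] at hj
        nlinarith
      -- G k ⊆ the j-th layer
      have hlayer : G k ⊆ ⋃ m : ℕ, ⋂ (n) (_ : m ≤ n), D n j k := by
        rw [hG]
        exact iInter_subset _ j
      -- the layer has measure ≤ 2*C*c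
      have hDmeas : ∀ n : ℕ, MeasurableSet (D n j k) := by
        intro n
        apply MeasurableSet.iUnion
        intro i
        apply MeasurableSet.inter
        · exact ((hX.measurable _).sub (hX.measurable _)) measurableSet_Ici
        · exact MeasurableSet.union ((hX.measurable _) measurableSet_Icc)
            ((hX.measurable _) measurableSet_Icc)
      have hmono_tail : Monotone (fun m : ℕ => ⋂ (n) (_ : m ≤ n), D n j k) := by
        intro m m' hmm'
        apply iInter_mono'
        intro n
        refine ⟨n, ?_⟩
        exact iInter_mono' (fun hmn => ⟨le_trans hmm' hmn, le_refl _⟩)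
      have hsup : P (⋃ m : ℕ, ⋂ (n) (_ : m ≤ n), D n j k)
          = ⨆ m : ℕ, P (⋂ (n) (_ : m ≤ n), D n j k) := by
        apply Directed.measure_iUnion
        exact hmono_tail.directed_le
      -- bound each tail
      have htailbound : ∀ m : ℕ, P (⋂ (n) (_ : m ≤ n), D n j k) ≤ 2 * C * c := by
        intro m
        obtain ⟨m₂, hm₂⟩ := exists_nat_gt ((β-α)/δu)
        obtain ⟨n, hn, hnC⟩ := hCseq (max m (m₂+1))
        have hnm : m ≤ n := le_trans (le_max_left _ _) hn
        have hnm₂ : m₂ + 1 ≤ n := le_trans (le_max_right _ _) hn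
        have hnpos : 0 < n := lt_of_lt_of_le (Nat.succ_pos _) hnm₂
        have hnR : (0:ℝ) < n := by exact_mod_cast hnpos
        have hhp := hhpos n hnpos
        have hmeshu : hh n < δu := by
          rw [hhdef, div_lt_iff₀ hnR]
          have h1 : ((m₂:ℝ)+1) ≤ n := by exact_mod_cast hnm₂
          rw [div_lt_iff₀ hδu] at hm₂
          nlinarith
        refine le_trans (measure_mono (iInter₂_subset n hnm)) ?_
        -- bound P (D n j k)
        have hterm : ∀ i : Fin n,
            P ({ω | X (gp n ((i:ℕ)+1)) ω - X (gp n (i:ℕ)) ω ∈ Ici (1/((k:ℝ)+1)/2)}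
              ∩ ({ω | X (gp n ((i:ℕ)+1)) ω ∈ II n (i:ℕ) j}
                ∪ {ω | X (gp n (i:ℕ)) ω ∈ II n (i:ℕ) j}))
            ≤ 2 * c * P {ω | X (hh n) ω ∈ Ici (ε/2)} := by
          intro i
          have hgpi0 : (0:ℝ) ≤ gp n (i:ℕ) :=
            le_trans hα.le (hgp_mem n (i:ℕ) (le_of_lt i.2)).1
          have hgpile : gp n (i:ℕ) ≤ gp n ((i:ℕ)+1) := by
            simp only [hgp]; push_cast
            nlinarith [hhp.le]
          have hgpiα : α ≤ gp n (i:ℕ) := (hgp_mem n (i:ℕ) (le_of_lt i.2)).1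
          -- the interval II is inside a 2γ-window
          have hIIsub : ∀ v : ℝ, {u : ℝ | u + v ∈ II n (i:ℕ) j} ⊆
              Icc (((f (gp n (i:ℕ)) - 1/((j:ℝ)+1) + (f (gp n ((i:ℕ)+1)) + 1/((j:ℝ)+1)))/2 - v) - γ)
                  (((f (gp n (i:ℕ)) - 1/((j:ℝ)+1) + (f (gp n ((i:ℕ)+1)) + 1/((j:ℝ)+1)))/2 - v) + γ) := by
            intro v u hu
            rw [hII, mem_setOf_eq, mem_Icc] at hu
            rw [mem_Icc]
            have hfd : f (gp n ((i:ℕ)+1)) - f (gp n (i:ℕ)) < γ/2 := by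
              have h1 := hδu' _ (hgp_mem n (i:ℕ) (le_of_lt i.2)) _ (hgp_mem n ((i:ℕ)+1) i.2)
                (by
                  rw [Real.dist_eq]
                  have : gp n ((i:ℕ)+1) - gp n (i:ℕ) = hh n := by
                    simp only [hgp]; push_cast; ring
                  rw [abs_sub_comm, this]
                  rw [abs_of_pos hhp]
                  exact hmeshu)
              rw [Real.dist_eq] at h1
              have := le_abs_self (f (gp n (i:ℕ)) - f (gp n ((i:ℕ)+1)))
              have := neg_abs_le (f (gp n (i:ℕ)) - f (gp n ((i:ℕ)+1)))
              linarith [abs_lt.mp h1]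
            constructor <;> nlinarith [hu.1, hu.2, hηγ]
          have hconcII : ∀ v : ℝ, P {ω | X (gp n (i:ℕ)) ω ∈ {u | u + v ∈ II n (i:ℕ) j}} ≤ c := by
            intro v
            exact le_trans (measure_mono (fun ω hω => hIIsub v hω))
              (hγ _ hgpiα ((f (gp n (i:ℕ)) - 1/((j:ℝ)+1) + (f (gp n ((i:ℕ)+1)) + 1/((j:ℝ)+1)))/2 - v))
          have hA : MeasurableSet (II n (i:ℕ) j) := by rw [hII]; exact measurableSet_Icc
          have hright := pair_bound_right hX hgpi0 hgpile (B := Ici (ε/2)) hA measurableSet_Ici (c := c) hconcII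
          have hleft := pair_bound_left hX hgpi0 hgpile (B := Ici (ε/2)) hA measurableSet_Ici (c := c) (by
            have := hconcII 0
            simpa using this)
          have hsplit : ({ω | X (gp n ((i:ℕ)+1)) ω - X (gp n (i:ℕ)) ω ∈ Ici (1/((k:ℝ)+1)/2)}
              ∩ ({ω | X (gp n ((i:ℕ)+1)) ω ∈ II n (i:ℕ) j}
                ∪ {ω | X (gp n (i:ℕ)) ω ∈ II n (i:ℕ) j}))
              ⊆ {ω | X (gp n ((i:ℕ)+1)) ω ∈ II n (i:ℕ) j
                    ∧ X (gp n ((i:ℕ)+1)) ω - X (gp n (i:ℕ)) ω ∈ Ici (ε/2)}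
                ∪ {ω | X (gp n (i:ℕ)) ω ∈ II n (i:ℕ) j
                    ∧ X (gp n ((i:ℕ)+1)) ω - X (gp n (i:ℕ)) ω ∈ Ici (ε/2)} := by
            intro ω hω
            obtain ⟨h1, h2⟩ := hω
            rw [hεdef]
            rcases h2 with h2 | h2
            · left; exact ⟨h2, h1⟩
            · right; exact ⟨h2, h1⟩
          have hstat : P {ω | X (gp n ((i:ℕ)+1)) ω - X (gp n (i:ℕ)) ω ∈ Ici (ε/2)}
              = P {ω | X (hh n) ω ∈ Ici (ε/2)} := by
            have := stat_eval hX hgpi0 hgpile (B := Ici (ε/2)) measurableSet_Ici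
            rw [show gp n ((i:ℕ)+1) - gp n (i:ℕ) = hh n from by
              simp only [hgp]; push_cast; ring] at this
            exact this
          calc P _ ≤ P ({ω | X (gp n ((i:ℕ)+1)) ω ∈ II n (i:ℕ) j
                    ∧ X (gp n ((i:ℕ)+1)) ω - X (gp n (i:ℕ)) ω ∈ Ici (ε/2)}
                ∪ {ω | X (gp n (i:ℕ)) ω ∈ II n (i:ℕ) j
                    ∧ X (gp n ((i:ℕ)+1)) ω - X (gp n (i:ℕ)) ω ∈ Ici (ε/2)}) :=
                measure_mono hsplit
            _ ≤ P {ω | X (gp n ((i:ℕ)+1)) ω ∈ II n (i:ℕ) j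
                    ∧ X (gp n ((i:ℕ)+1)) ω - X (gp n (i:ℕ)) ω ∈ Ici (ε/2)}
                + P {ω | X (gp n (i:ℕ)) ω ∈ II n (i:ℕ) j
                    ∧ X (gp n ((i:ℕ)+1)) ω - X (gp n (i:ℕ)) ω ∈ Ici (ε/2)} :=
                measure_union_le _ _
            _ ≤ c * P {ω | X (gp n ((i:ℕ)+1)) ω - X (gp n (i:ℕ)) ω ∈ Ici (ε/2)}
                + c * P {ω | X (gp n ((i:ℕ)+1)) ω - X (gp n (i:ℕ)) ω ∈ Ici (ε/2)} :=
                add_le_add hright hleft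
            _ = 2 * c * P {ω | X (gp n ((i:ℕ)+1)) ω - X (gp n (i:ℕ)) ω ∈ Ici (ε/2)} := by
                ring
            _ = 2 * c * P {ω | X (hh n) ω ∈ Ici (ε/2)} := by rw [hstat]
        calc P (D n j k) ≤ ∑ i : Fin n, P (_) := by
              rw [hD]
              exact measure_iUnion_fintype_le _ _
          _ ≤ ∑ _i : Fin n, 2 * c * P {ω | X (hh n) ω ∈ Ici (ε/2)} :=
              Finset.sum_le_sum (fun i _ => hterm i)
          _ = (n : ℝ≥0∞) * (2 * c * P {ω | X (hh n) ω ∈ Ici (ε/2)}) := by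
              rw [Finset.sum_const, Finset.card_univ, Fintype.card_fin, nsmul_eq_mul]
          _ = 2 * c * ((n : ℝ≥0∞) * P {ω | X (hh n) ω ∈ Ici (ε/2)}) := by ring
          _ ≤ 2 * c * C := by
              apply mul_le_mul_right
              rw [hhdef] at *
              exact hnC
          _ = 2 * C * c := by ring
      refine le_trans (measure_mono hlayer) ?_
      rw [hsup]
      exact iSup_le htailbound
    -- let l → ∞
    have hlim : Tendsto (fun l : ℕ => 2 * C * ENNReal.ofReal (1/((l:ℝ)+1))) atTop (𝓝 0) := by
      have h1 : Tendsto (fun l : ℕ => ENNReal.ofReal (1/((l:ℝ)+1))) atTop (𝓝 0) := by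
        rw [show (0:ℝ≥0∞) = ENNReal.ofReal 0 from by simp]
        exact ENNReal.tendsto_ofReal tendsto_one_div_add_atTop_nhds_zero_nat
      have h2C : (2:ℝ≥0∞) * C ≠ ⊤ := ENNReal.mul_ne_top ENNReal.ofNat_ne_top hCfin
      have h2 := ENNReal.Tendsto.const_mul h1 (Or.inr h2C)
      simpa using h2
    have := ge_of_tendsto hlim (Eventually.of_forall hbound)
    exact le_antisymm (by simpa using this) (zero_le)
  -- combine
  refine le_antisymm ?_ (zero_le)
  refine le_trans (measure_mono hsubset) ?_
  refine le_trans (measure_iUnion_le _) ?_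
  simp [hGnull]


end LevyAux
end

noncomputable section

/-- The first passage time `T_f = inf {t > 0 : X_t > f(t)}` of a real process above the graph
of a function `f`, as an element of `ℝ≥0∞` (equal to `∞` if there is no crossing). -/
def firstPassage (f : ℝ → ℝ) {Ω : Type*} (X : ℝ → Ω → ℝ) (ω : Ω) : ℝ≥0∞ :=
  sInf {s : ℝ≥0∞ | ∃ t : ℝ, 0 < t ∧ f t < X t ω ∧ s = ENNReal.ofReal t}

/-- Let `X` be a real Lévy process such that `|X|` is not a subordinator and
the law of `X_t` is atomless for each `t > 0`, and let `f : (0,∞) → (0,∞)` be continuous and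
nondecreasing with `lim_{t→0+} f(t) > 0`.  Then `P(T_f > 0) = 1` and, at time `T_f`, the
process can neither jump onto the graph of `f` nor jump from it:
`P(X_{T_f−} = f(T_f) < X_{T_f}, T_f < ∞) = P(X_{T_f−} < X_{T_f} = f(T_f), T_f < ∞) = 0`. -/
theorem levy_no_jump_on_graph_nondecreasing
    {Ω : Type*} [MeasurableSpace Ω] (P : Measure Ω) [IsProbabilityMeasure P]
    (X : ℝ → Ω → ℝ) (hX : IsLevyProcess P X)
    -- `|X|` is not a subordinator
    (hnotsub₁ : ¬ ∀ᵐ ω ∂P, MonotoneOn (fun t => X t ω) (Ici (0:ℝ)))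
    (hnotsub₂ : ¬ ∀ᵐ ω ∂P, AntitoneOn (fun t => X t ω) (Ici (0:ℝ)))
    -- the law of `X_t` is atomless for each `t > 0`
    (hatomless : ∀ t : ℝ, 0 < t → ∀ x : ℝ, P {ω | X t ω = x} = 0)
    -- `f : (0,∞) → (0,∞)` is continuous and nondecreasing, with `lim_{t→0+} f(t) > 0`
    (f : ℝ → ℝ) (hf_cont : ContinuousOn f (Ioi 0)) (hf_mono : MonotoneOn f (Ioi 0))
    (hf_pos : ∀ x : ℝ, 0 < x → 0 < f x)
    (f0 : ℝ) (hf0_pos : 0 < f0) (hf_lim : Tendsto f (𝓝[>] 0) (𝓝 f0)) :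
    P {ω | 0 < firstPassage f X ω} = 1 ∧
    P {ω | Function.leftLim (fun t => X t ω) (firstPassage f X ω).toReal =
          f (firstPassage f X ω).toReal ∧
        f (firstPassage f X ω).toReal < X (firstPassage f X ω).toReal ω ∧
        firstPassage f X ω < ⊤} = 0 ∧
    P {ω | Function.leftLim (fun t => X t ω) (firstPassage f X ω).toReal <
          X (firstPassage f X ω).toReal ω ∧
        X (firstPassage f X ω).toReal ω = f (firstPassage f X ω).toReal ∧
        firstPassage f X ω < ⊤} = 0 := by
  classical
  -- `f ≥ f0` on `(0, ∞)`
  have hf0le : ∀ t : ℝ, 0 < t → f0 ≤ f t := by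
    intro t ht
    refine le_of_tendsto hf_lim ?_
    filter_upwards [Ioo_mem_nhdsGT_of_mem (show (0:ℝ) ∈ Ico 0 t from ⟨le_refl _, ht⟩)]
      with s hs
    exact hf_mono hs.1 ht hs.2.le
  -- a.s. lower bound for the first passage time
  have hTlb : ∀ ω, X 0 ω = 0 → ∃ δ : ℝ, 0 < δ ∧
      ∀ s ∈ {s : ℝ≥0∞ | ∃ t : ℝ, 0 < t ∧ f t < X t ω ∧ s = ENNReal.ofReal t},
        ENNReal.ofReal δ ≤ s := by
    intro ω hω0
    have hrc := hX.right_cont ω 0 (le_refl 0)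
    rw [hω0] at hrc
    have := hrc.eventually (Metric.ball_mem_nhds (0:ℝ) hf0_pos)
    rw [eventually_nhdsWithin_iff, Metric.eventually_nhds_iff] at this
    obtain ⟨δ, hδpos, hb⟩ := this
    refine ⟨δ, hδpos, ?_⟩
    rintro s ⟨t, ht, hcross, rfl⟩
    have hts : δ ≤ t := by
      by_contra hlt
      push_neg at hlt
      have h1 := hb (show dist t 0 < δ by
        rw [Real.dist_eq, sub_zero, abs_of_pos ht]; exact hlt) (le_of_lt ht)
      rw [Real.dist_eq, sub_zero] at h1
      have h2 : X t ω < f0 := lt_of_le_of_lt (le_abs_self _) h1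
      have h3 := hf0le t ht
      linarith
    exact ENNReal.ofReal_le_ofReal hts
  have hTpos : ∀ ω, X 0 ω = 0 → 0 < firstPassage f X ω := by
    intro ω hω0
    obtain ⟨δ, hδpos, hlb⟩ := hTlb ω hω0
    have h1 : ENNReal.ofReal δ ≤ firstPassage f X ω := le_sInf hlb
    exact lt_of_lt_of_le (by simpa using ENNReal.ofReal_pos.mpr hδpos) h1
  have hmeas0 : MeasurableSet {ω | X 0 ω = 0} :=
    hX.measurable 0 (measurableSet_singleton 0)
  have hP0 : P {ω | X 0 ω = 0} = 1 := by
    have h1 : P {ω | ¬ X 0 ω = 0} = 0 := ae_iff.mp hX.init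
    have h2 : {ω | X 0 ω = 0}ᶜ = {ω | ¬ X 0 ω = 0} := rfl
    have h3 := prob_compl_eq_zero_iff (μ := P) hmeas0
    rw [h2] at h3
    exact h3.mp h1
  have hPne0 : P {ω | ¬ X 0 ω = 0} = 0 := ae_iff.mp hX.init
  refine ⟨?_, ?_, ?_⟩
  · -- part 1
    refine le_antisymm prob_le_one ?_
    rw [← hP0]
    exact measure_mono (fun ω hω => hTpos ω hω)
  · -- part 2 : jump from the graph
    refine le_antisymm ?_ (zero_le)
    have hsub : {ω | Function.leftLim (fun t => X t ω) (firstPassage f X ω).toReal =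
          f (firstPassage f X ω).toReal ∧
        f (firstPassage f X ω).toReal < X (firstPassage f X ω).toReal ω ∧
        firstPassage f X ω < ⊤}
        ⊆ {ω | ¬ X 0 ω = 0} ∪ ⋃ m : ℕ,
          {ω | ∃ t, t ∈ Icc (1/((m:ℝ)+1)) ((m:ℝ)+2) ∧
            leftLim (fun s => X s ω) t < X t ω ∧
            (X t ω = f t ∨ leftLim (fun s => X s ω) t = f t)} := by
      intro ω hω
      by_cases hω0 : X 0 ω = 0
      · right
        obtain ⟨heq, hlt, hfin⟩ := hω
        set τ : ℝ := (firstPassage f X ω).toReal with hτdef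
        obtain ⟨δ, hδpos, hlb⟩ := hTlb ω hω0
        have hτδ : δ ≤ τ := by
          have h1 : ENNReal.ofReal δ ≤ firstPassage f X ω := le_sInf hlb
          have := ENNReal.toReal_mono (ne_of_lt hfin) h1
          rwa [ENNReal.toReal_ofReal hδpos.le] at this
        have hτpos : 0 < τ := lt_of_lt_of_le hδpos hτδ
        obtain ⟨m, hm⟩ := exists_nat_gt (max τ (1/τ))
        have hmτ : τ < m := lt_of_le_of_lt (le_max_left _ _) hm
        have hm1τ : 1/τ < m := lt_of_le_of_lt (le_max_right _ _) hm
        have hmpos : (0:ℝ) < m := lt_trans hτpos hmτ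
        refine mem_iUnion.mpr ⟨m, τ, ⟨?_, by linarith⟩, ?_, ?_⟩
        · rw [div_le_iff₀ (by positivity)]
          rw [div_lt_iff₀ hτpos] at hm1τ
          nlinarith
        · rw [heq]; exact hlt
        · right; exact heq
      · left; exact hω0
    refine le_trans (measure_mono hsub) ?_
    refine le_trans (measure_union_le _ _) ?_
    rw [hPne0]
    refine le_trans (le_of_eq (zero_add _)) ?_
    refine le_trans (measure_iUnion_le _) ?_
    have hz : ∀ m : ℕ, P {ω | ∃ t, t ∈ Icc (1/((m:ℝ)+1)) ((m:ℝ)+2) ∧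
        leftLim (fun s => X s ω) t < X t ω ∧
        (X t ω = f t ∨ leftLim (fun s => X s ω) t = f t)} = 0 := by
      intro m
      exact LevyAux.bad_null hX hatomless hf_cont hf_mono (by positivity)
        (by
          have h1 : 1/((m:ℝ)+1) ≤ 1 := by
            rw [div_le_one (by positivity)]
            linarith [Nat.cast_nonneg (α := ℝ) m]
          linarith [Nat.cast_nonneg (α := ℝ) m])
    exact le_of_eq (ENNReal.tsum_eq_zero.mpr hz)
  · -- part 3 : jump onto the graph
    refine le_antisymm ?_ (zero_le)
    have hsub : {ω | Function.leftLim (fun t => X t ω) (firstPassage f X ω).toReal <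
          X (firstPassage f X ω).toReal ω ∧
        X (firstPassage f X ω).toReal ω = f (firstPassage f X ω).toReal ∧
        firstPassage f X ω < ⊤}
        ⊆ {ω | ¬ X 0 ω = 0} ∪ ⋃ m : ℕ,
          {ω | ∃ t, t ∈ Icc (1/((m:ℝ)+1)) ((m:ℝ)+2) ∧
            leftLim (fun s => X s ω) t < X t ω ∧
            (X t ω = f t ∨ leftLim (fun s => X s ω) t = f t)} := by
      intro ω hω
      by_cases hω0 : X 0 ω = 0
      · right
        obtain ⟨hlt, heq, hfin⟩ := hω
        set τ : ℝ := (firstPassage f X ω).toReal with hτdef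
        obtain ⟨δ, hδpos, hlb⟩ := hTlb ω hω0
        have hτδ : δ ≤ τ := by
          have h1 : ENNReal.ofReal δ ≤ firstPassage f X ω := le_sInf hlb
          have := ENNReal.toReal_mono (ne_of_lt hfin) h1
          rwa [ENNReal.toReal_ofReal hδpos.le] at this
        have hτpos : 0 < τ := lt_of_lt_of_le hδpos hτδ
        obtain ⟨m, hm⟩ := exists_nat_gt (max τ (1/τ))
        have hmτ : τ < m := lt_of_le_of_lt (le_max_left _ _) hm
        have hm1τ : 1/τ < m := lt_of_le_of_lt (le_max_right _ _) hm
        have hmpos : (0:ℝ) < m := lt_trans hτpos hmτ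
        refine mem_iUnion.mpr ⟨m, τ, ⟨?_, by linarith⟩, hlt, Or.inl heq⟩
        rw [div_le_iff₀ (by positivity)]
        rw [div_lt_iff₀ hτpos] at hm1τ
        nlinarith
      · left; exact hω0
    refine le_trans (measure_mono hsub) ?_
    refine le_trans (measure_union_le _ _) ?_
    rw [hPne0]
    refine le_trans (le_of_eq (zero_add _)) ?_
    refine le_trans (measure_iUnion_le _) ?_
    have hz : ∀ m : ℕ, P {ω | ∃ t, t ∈ Icc (1/((m:ℝ)+1)) ((m:ℝ)+2) ∧
        leftLim (fun s => X s ω) t < X t ω ∧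
        (X t ω = f t ∨ leftLim (fun s => X s ω) t = f t)} = 0 := by
      intro m
      exact LevyAux.bad_null hX hatomless hf_cont hf_mono (by positivity)
        (by
          have h1 : 1/((m:ℝ)+1) ≤ 1 := by
            rw [div_le_one (by positivity)]
            linarith [Nat.cast_nonneg (α := ℝ) m]
          linarith [Nat.cast_nonneg (α := ℝ) m])
    exact le_of_eq (ENNReal.tsum_eq_zero.mpr hz)


end
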